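/- arXiv:2411.15962 — 2 statements merged into one kernel-verified Lean document; each statement's English description precedes it below -/
import Mathlib

section
/- For every t ≥ 0 one has t ≤ G⁻¹(t) ≤ √6 · t. -/
open Real Filter Topology

/-- The piecewise function `g` from the paper: `g(t) = sqrt(1 - κ t^2)` for `|t| < sqrt(1/(3κ))`,
and `g(t) = 1/(3 sqrt(2κ) |t|) + sqrt(1/6)` for `|t| ≥ sqrt(1/(3κ))`; in particular `g` is even. -/
noncomputable def gfun (κ : ℝ) (t : ℝ) : ℝ :=
  if |t| < Real.sqrt (1 / (3 * κ)) then Real.sqrt (1 - κ * t ^ 2)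
  else 1 / (3 * Real.sqrt (2 * κ) * |t|) + Real.sqrt (1 / 6)

/-- `G(t) = ∫ s in [0,t], g(s) ds`. -/
noncomputable def Gfun (κ : ℝ) (t : ℝ) : ℝ := ∫ s in (0:ℝ)..t, gfun κ s

/-- `G⁻¹`, the inverse function of `G`. -/
noncomputable def Ginv (κ : ℝ) : ℝ → ℝ := Function.invFun (Gfun κ)

lemma gfun_lb (κ : ℝ) (hκ : 0 < κ) (s : ℝ) : Real.sqrt (1/6) ≤ gfun κ s := by
  unfold gfun
  split_ifs with h
  · have hs2 : |s| ^ 2 < 1 / (3 * κ) := by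
      have := (Real.lt_sqrt (abs_nonneg s)).mp h
      linarith
    rw [sq_abs] at hs2
    apply Real.sqrt_le_sqrt
    rw [lt_div_iff₀ (by positivity)] at hs2
    nlinarith
  · have : (0:ℝ) ≤ 1 / (3 * Real.sqrt (2 * κ) * |s|) := by positivity
    linarith

lemma sqrt_prod_eq (κ : ℝ) (hκ : 0 < κ) :
    Real.sqrt (2 * κ) * Real.sqrt (1 / (3 * κ)) = Real.sqrt (2/3) := by
  rw [← Real.sqrt_mul (by positivity)]
  congr 1
  field_simp

lemma key_one (κ : ℝ) (hκ : 0 < κ) :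
    3 * Real.sqrt (2/3) * Real.sqrt (1/6) = 1 := by
  rw [mul_assoc, ← Real.sqrt_mul (by norm_num)]
  rw [show (2:ℝ)/3 * (1/6) = (1/3)^2 by norm_num, Real.sqrt_sq (by norm_num)]
  norm_num

lemma gfun_ub (κ : ℝ) (hκ : 0 < κ) (s : ℝ) : gfun κ s ≤ 1 := by
  unfold gfun
  split_ifs with h
  · have := Real.sqrt_le_sqrt (show 1 - κ * s ^ 2 ≤ 1 by nlinarith [sq_nonneg s])
    simpa using this
  · push_neg at h
    have hs0 : 0 < Real.sqrt (1 / (3 * κ)) := Real.sqrt_pos.mpr (by positivity)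
    have hsabs : 0 < |s| := lt_of_lt_of_le hs0 h
    have h23 : 0 < Real.sqrt (2/3) := Real.sqrt_pos.mpr (by norm_num)
    have h2κ : 0 < Real.sqrt (2 * κ) := Real.sqrt_pos.mpr (by positivity)
    have hden : 3 * Real.sqrt (2/3) ≤ 3 * Real.sqrt (2 * κ) * |s| := by
      calc 3 * Real.sqrt (2/3) = 3 * (Real.sqrt (2*κ) * Real.sqrt (1/(3*κ))) := by
            rw [sqrt_prod_eq κ hκ]
        _ ≤ 3 * Real.sqrt (2 * κ) * |s| := by
            rw [← mul_assoc]
            exact mul_le_mul_of_nonneg_left h (by positivity)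
    have hterm : 1 / (3 * Real.sqrt (2 * κ) * |s|) ≤ Real.sqrt (1/6) := by
      rw [div_le_iff₀ (by positivity)]
      have h1 := key_one κ hκ
      nlinarith [Real.sqrt_nonneg ((1:ℝ)/6)]
    have h16 : Real.sqrt (1/6) ≤ 1/2 := by
      rw [show (1:ℝ)/2 = Real.sqrt ((1/2)^2) by rw [Real.sqrt_sq]; norm_num]
      apply Real.sqrt_le_sqrt; norm_num
    linarith

lemma gfun_meas (κ : ℝ) : Measurable (gfun κ) := by
  unfold gfun
  apply Measurable.ite
  · exact measurableSet_lt (by fun_prop) measurable_const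
  · fun_prop
  · apply Measurable.add _ measurable_const
    apply Measurable.div measurable_const
    fun_prop

lemma gfun_intInt (κ : ℝ) (hκ : 0 < κ) (a b : ℝ) :
    IntervalIntegrable (gfun κ) MeasureTheory.volume a b := by
  apply IntervalIntegrable.mono_fun (intervalIntegrable_const (c := (1:ℝ)))
  · exact (gfun_meas κ).aestronglyMeasurable.restrict
  · filter_upwards with s
    rw [Real.norm_eq_abs, Real.norm_eq_abs, abs_of_nonneg, abs_one]
    · exact gfun_ub κ hκ s
    · exact le_trans (Real.sqrt_nonneg _) (gfun_lb κ hκ s)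

lemma Gfun_strictMono (κ : ℝ) (hκ : 0 < κ) : StrictMono (Gfun κ) := by
  intro a b hab
  have hadd : Gfun κ a + ∫ s in a..b, gfun κ s = Gfun κ b :=
    intervalIntegral.integral_add_adjacent_intervals
      (gfun_intInt κ hκ 0 a) (gfun_intInt κ hκ a b)
  have hpos : 0 < ∫ s in a..b, gfun κ s := by
    have : (b - a) * Real.sqrt (1/6) = ∫ s in a..b, Real.sqrt (1/6) := by
      rw [intervalIntegral.integral_const, smul_eq_mul]
    calc (0:ℝ) < (b - a) * Real.sqrt (1/6) := by
          have : 0 < Real.sqrt (1/6) := Real.sqrt_pos.mpr (by norm_num)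
          nlinarith
      _ = ∫ s in a..b, Real.sqrt (1/6) := this
      _ ≤ ∫ s in a..b, gfun κ s := by
          apply intervalIntegral.integral_mono_on hab.le
            intervalIntegrable_const (gfun_intInt κ hκ a b)
          intro s _
          exact gfun_lb κ hκ s
  linarith

lemma Gfun_bounds (κ : ℝ) (hκ : 0 < κ) (x : ℝ) (hx : 0 ≤ x) :
    Real.sqrt (1/6) * x ≤ Gfun κ x ∧ Gfun κ x ≤ x := by
  constructor
  · calc Real.sqrt (1/6) * x = ∫ _ in (0:ℝ)..x, Real.sqrt (1/6) := by
          rw [intervalIntegral.integral_const, smul_eq_mul, sub_zero, mul_comm]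
      _ ≤ Gfun κ x := by
          apply intervalIntegral.integral_mono_on hx
            intervalIntegrable_const (gfun_intInt κ hκ 0 x)
          intro s _; exact gfun_lb κ hκ s
  · calc Gfun κ x ≤ ∫ _ in (0:ℝ)..x, (1:ℝ) := by
          apply intervalIntegral.integral_mono_on hx
            (gfun_intInt κ hκ 0 x) intervalIntegrable_const
          intro s _; exact gfun_ub κ hκ s
      _ = x := by rw [intervalIntegral.integral_const, smul_eq_mul, sub_zero, mul_one]

lemma Gfun_surj (κ : ℝ) (hκ : 0 < κ) : Function.Surjective (Gfun κ) := by
  have hcont : Continuous (Gfun κ) :=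
    intervalIntegral.continuous_primitive (gfun_intInt κ hκ) 0
  have hc : (0:ℝ) < Real.sqrt (1/6) := Real.sqrt_pos.mpr (by norm_num)
  have hlin_top : Tendsto (fun x : ℝ => Real.sqrt (1/6) * x) atTop atTop :=
    tendsto_id.const_mul_atTop hc
  have hlin_bot : Tendsto (fun x : ℝ => Real.sqrt (1/6) * x) atBot atBot :=
    tendsto_id.const_mul_atBot hc
  apply hcont.surjective
  · apply tendsto_atTop_mono' _ _ hlin_top
    filter_upwards [eventually_ge_atTop (0:ℝ)] with x hx
    exact (Gfun_bounds κ hκ x hx).1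
  · apply tendsto_atBot_mono' _ _ hlin_bot
    filter_upwards [eventually_le_atBot (0:ℝ)] with x hx
    have hadd : Gfun κ x + ∫ s in x..(0:ℝ), gfun κ s = Gfun κ 0 :=
      intervalIntegral.integral_add_adjacent_intervals
        (gfun_intInt κ hκ 0 x) (gfun_intInt κ hκ x 0)
    have h0 : Gfun κ 0 = 0 := by simp [Gfun]
    have hge : (0 - x) * Real.sqrt (1/6) ≤ ∫ s in x..(0:ℝ), gfun κ s := by
      calc (0 - x) * Real.sqrt (1/6) = ∫ _ in x..(0:ℝ), Real.sqrt (1/6) := by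
            rw [intervalIntegral.integral_const, smul_eq_mul]
        _ ≤ ∫ s in x..(0:ℝ), gfun κ s := by
            apply intervalIntegral.integral_mono_on hx
              intervalIntegrable_const (gfun_intInt κ hκ x 0)
            intro s _; exact gfun_lb κ hκ s
    nlinarith

/-- `t ≤ G⁻¹ t ≤ sqrt 6 * t` for every `t ≥ 0`. -/
theorem stmt_8 (κ : ℝ) (hκ : 0 < κ) :
    ∀ t : ℝ, 0 ≤ t → t ≤ Ginv κ t ∧ Ginv κ t ≤ Real.sqrt 6 * t := by
  intro t ht
  have hsurj := Gfun_surj κ hκ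
  have hsm := Gfun_strictMono κ hκ
  set x := Ginv κ t with hxdef
  have hGx : Gfun κ x = t := Function.invFun_eq (hsurj t)
  have h0 : Gfun κ 0 = 0 := by simp [Gfun]
  have hx0 : 0 ≤ x := by
    by_contra hneg
    push_neg at hneg
    have := hsm hneg
    rw [hGx, h0] at this
    linarith
  obtain ⟨hlo, hhi⟩ := Gfun_bounds κ hκ x hx0
  rw [hGx] at hlo hhi
  refine ⟨hhi, ?_⟩
  have hmul : Real.sqrt 6 * Real.sqrt (1/6) = 1 := by
    rw [← Real.sqrt_mul (by norm_num)]
    norm_num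
  have h6 : (0:ℝ) ≤ Real.sqrt 6 := Real.sqrt_nonneg 6
  calc x = Real.sqrt 6 * Real.sqrt (1/6) * x := by rw [hmul, one_mul]
    _ = Real.sqrt 6 * (Real.sqrt (1/6) * x) := by ring
    _ ≤ Real.sqrt 6 * t := mul_le_mul_of_nonneg_left hlo h6
end

section
/- For every t ≥ 0 one has -1/2 ≤ t · g'(t) / g(t) ≤ 0, where g' denotes the derivative of g. -/
open Real Filter Topology Set

lemma c_pos {κ : ℝ} (hκ : 0 < κ) : 0 < Real.sqrt (1 / (3 * κ)) :=
  Real.sqrt_pos.2 (by positivity)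

lemma c_sq {κ : ℝ} (hκ : 0 < κ) : (Real.sqrt (1 / (3 * κ)))^2 = 1 / (3 * κ) :=
  Real.sq_sqrt (by positivity)

lemma b_eq {κ : ℝ} (hκ : 0 < κ) :
    1 / (3 * Real.sqrt (2 * κ)) = Real.sqrt (1/6) * Real.sqrt (1 / (3 * κ)) := by
  rw [← Real.sqrt_mul (by norm_num : (0:ℝ) ≤ 1/6),
    show (1:ℝ)/6 * (1 / (3 * κ)) = (18 * κ)⁻¹ by field_simp; ring,
    Real.sqrt_inv,
    show (18:ℝ) * κ = 3^2 * (2 * κ) by ring,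
    Real.sqrt_mul (by positivity) (2 * κ),
    Real.sqrt_sq (by norm_num : (0:ℝ) ≤ 3), one_div]

lemma deriv_branch1 {κ t : ℝ} (hs : 0 < 1 - κ * t^2) :
    HasDerivAt (fun x => Real.sqrt (1 - κ * x^2)) (-(κ*t) / Real.sqrt (1 - κ*t^2)) t := by
  have h1 : HasDerivAt (fun x : ℝ => 1 - κ * x^2) (-(κ * (2*t))) t := by
    simpa using ((hasDerivAt_pow 2 t).const_mul κ).const_sub 1
  have h2 := (Real.hasDerivAt_sqrt (ne_of_gt hs)).comp t h1
  refine h2.congr_deriv ?_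
  have h3 : Real.sqrt (1 - κ*t^2) ≠ 0 := by positivity
  field_simp

lemma deriv_branch2 {κ : ℝ} (hκ : 0 < κ) {t : ℝ} (ht : t ≠ 0) :
    HasDerivAt (fun x => 1 / (3 * Real.sqrt (2*κ) * x) + Real.sqrt (1/6))
      (-(1 / (3 * Real.sqrt (2*κ))) / t^2) t := by
  have h := ((hasDerivAt_inv ht).const_mul ((3 * Real.sqrt (2*κ))⁻¹)).add_const (Real.sqrt (1/6))
  have he : (fun x : ℝ => (3 * Real.sqrt (2*κ))⁻¹ * x⁻¹ + Real.sqrt (1/6)) =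
      (fun x => 1 / (3 * Real.sqrt (2*κ) * x) + Real.sqrt (1/6)) := by
    funext x; rw [one_div, one_div, mul_inv]; ring
  rw [he] at h
  refine h.congr_deriv ?_
  field_simp

lemma gval {κ : ℝ} (hκ : 0 < κ) :
    gfun κ (Real.sqrt (1 / (3 * κ))) =
      Real.sqrt (1 - κ * (Real.sqrt (1 / (3 * κ)))^2) := by
  have hc : 0 < Real.sqrt (1 / (3 * κ)) := c_pos hκ
  have h23 : 1 - κ * (Real.sqrt (1 / (3 * κ)))^2 = 2/3 := by
    rw [c_sq hκ]; field_simp; ring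
  have hs23 : Real.sqrt (2/3) = 2 * Real.sqrt (1/6) := by
    rw [show (2:ℝ)/3 = 2^2 * (1/6) by norm_num, Real.sqrt_mul (by norm_num) (1/6),
      Real.sqrt_sq (by norm_num : (0:ℝ) ≤ 2)]
  rw [gfun, if_neg (by rw [abs_of_pos hc]; exact lt_irrefl _), abs_of_pos hc, h23, hs23,
    ← div_div, b_eq hκ, mul_div_assoc, div_self hc.ne']
  ring

lemma gfun_hasDerivAt_c {κ : ℝ} (hκ : 0 < κ) :
    HasDerivAt (gfun κ)
      (-(κ * Real.sqrt (1 / (3 * κ))) / Real.sqrt (1 - κ * (Real.sqrt (1 / (3 * κ)))^2))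
      (Real.sqrt (1 / (3 * κ))) := by
  set c := Real.sqrt (1 / (3 * κ)) with hc_def
  have hc : 0 < c := c_pos hκ
  have hc2 : c^2 = 1 / (3 * κ) := c_sq hκ
  have h23 : 1 - κ * c^2 = 2/3 := by rw [hc2]; field_simp; ring
  have hs : (0:ℝ) < 1 - κ * c^2 := by rw [h23]; norm_num
  have hq2 : Real.sqrt (1/6)^2 = 1/6 := Real.sq_sqrt (by norm_num)
  have hq0 : 0 < Real.sqrt (1/6) := Real.sqrt_pos.2 (by norm_num)
  have hs23 : Real.sqrt (2/3) = 2 * Real.sqrt (1/6) := by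
    rw [show (2:ℝ)/3 = 2^2 * (1/6) by norm_num, Real.sqrt_mul (by norm_num) (1/6),
      Real.sqrt_sq (by norm_num : (0:ℝ) ≤ 2)]
  have h1 : HasDerivAt (fun x => Real.sqrt (1 - κ * x^2)) (-(κ*c) / Real.sqrt (1 - κ*c^2)) c :=
    deriv_branch1 hs
  have h2 : HasDerivAt (fun x => 1 / (3 * Real.sqrt (2*κ) * x) + Real.sqrt (1/6))
      (-(1 / (3 * Real.sqrt (2*κ))) / c^2) c := deriv_branch2 hκ hc.ne'
  have hdeq : -(1 / (3 * Real.sqrt (2*κ))) / c^2 = -(κ*c) / Real.sqrt (1 - κ*c^2) := by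
    rw [h23, hs23, b_eq hκ, ← hc_def]
    rw [div_eq_div_iff (by positivity) (by positivity)]
    nlinarith [hq2, hc2, hc, hq0]
  have hW1 : HasDerivWithinAt (gfun κ) (-(κ*c) / Real.sqrt (1 - κ*c^2)) (Iic c) c := by
    apply h1.hasDerivWithinAt.congr_of_eventuallyEq ?_ (gval hκ)
    filter_upwards [self_mem_nhdsWithin,
      nhdsWithin_le_nhds (Ioi_mem_nhds (neg_lt_self hc))] with x hx1 hx2
    have hle : x ≤ c := hx1
    rcases lt_or_eq_of_le hle with h | h
    · have hxlt : |x| < c := abs_lt.2 ⟨hx2, h⟩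
      simp only [gfun, if_pos (show |x| < Real.sqrt (1 / (3 * κ)) from hxlt)]
    · subst h
      exact gval hκ
  have hW2 : HasDerivWithinAt (gfun κ) (-(κ*c) / Real.sqrt (1 - κ*c^2)) (Ici c) c := by
    have heq : ∀ x ∈ Ici c, gfun κ x = 1 / (3 * Real.sqrt (2*κ) * x) + Real.sqrt (1/6) := by
      intro x hx
      have hxc : c ≤ x := hx
      have hx0 : 0 < x := hc.trans_le hxc
      have hnot : ¬ |x| < c := not_lt.2 (by rw [abs_of_pos hx0]; exact hxc)
      rw [hc_def] at hnot
      simp only [gfun]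
      rw [if_neg hnot, abs_of_pos hx0]
    exact ((hdeq ▸ h2).hasDerivWithinAt).congr heq (heq c self_mem_Ici)
  have hU := hW1.union hW2
  rw [Iic_union_Ici] at hU
  exact hU.hasDerivAt (by simp)

/-- `-1/2 ≤ t * g' t / g t ≤ 0` for every `t ≥ 0`. -/
theorem stmt_9 (κ : ℝ) (hκ : 0 < κ) :
    ∀ t : ℝ, 0 ≤ t →
      -(1 / 2) ≤ t * deriv (gfun κ) t / gfun κ t ∧
        t * deriv (gfun κ) t / gfun κ t ≤ 0 := by
  intro t ht
  have hc : 0 < Real.sqrt (1 / (3 * κ)) := c_pos hκ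
  have hc2 : (Real.sqrt (1 / (3 * κ)))^2 = 1 / (3 * κ) := c_sq hκ
  have hq0 : 0 < Real.sqrt (1/6) := Real.sqrt_pos.2 (by norm_num)
  have hx13 : κ * (1 / (3 * κ)) = 1/3 := by field_simp
  rcases lt_trichotomy t (Real.sqrt (1 / (3 * κ))) with hlt | heqc | hgt
  · -- t < c : sqrt branch
    have habs : |t| < Real.sqrt (1 / (3 * κ)) := by rwa [abs_of_nonneg ht]
    have hu : κ * t^2 < 1/3 := by
      have ht2 : t^2 < 1 / (3 * κ) := by rw [← hc2]; nlinarith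
      calc κ * t^2 < κ * (1 / (3 * κ)) := mul_lt_mul_of_pos_left ht2 hκ
        _ = 1/3 := hx13
    have hs : (0:ℝ) < 1 - κ * t^2 := by nlinarith [sq_nonneg t]
    have hev : gfun κ =ᶠ[𝓝 t] (fun x => Real.sqrt (1 - κ * x^2)) := by
      have hopen : IsOpen {x : ℝ | |x| < Real.sqrt (1 / (3 * κ))} :=
        isOpen_lt continuous_abs continuous_const
      filter_upwards [hopen.mem_nhds habs] with x hx
      simp only [gfun, if_pos hx]
    have hder : deriv (gfun κ) t = -(κ*t) / Real.sqrt (1 - κ*t^2) :=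
      ((deriv_branch1 hs).congr_of_eventuallyEq hev).deriv
    have hgv : gfun κ t = Real.sqrt (1 - κ*t^2) := by simp only [gfun, if_pos habs]
    rw [hder, hgv]
    set A := Real.sqrt (1 - κ*t^2) with hA_def
    have hsq : A * A = 1 - κ*t^2 := Real.mul_self_sqrt hs.le
    have hA0 : 0 < A := Real.sqrt_pos.2 hs
    have hr : t * (-(κ*t) / A) / A = -(κ*t^2) / (A * A) := by
      field_simp
    rw [hr, hsq]
    constructor
    · rw [neg_div, neg_le_neg_iff, div_le_iff₀ hs]
      linarith
    · apply div_nonpos_of_nonpos_of_nonneg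
      · have : (0:ℝ) ≤ κ * t^2 := by positivity
        linarith
      · exact hs.le
  · -- t = c : boundary
    have hder : deriv (gfun κ) t
        = -(κ * Real.sqrt (1 / (3 * κ))) / Real.sqrt (1 - κ * (Real.sqrt (1 / (3 * κ)))^2) := by
      rw [heqc]; exact (gfun_hasDerivAt_c hκ).deriv
    have hgv : gfun κ t = Real.sqrt (1 - κ * (Real.sqrt (1 / (3 * κ)))^2) := by
      rw [heqc]; exact gval hκ
    have hs : (0:ℝ) < 1 - κ * (Real.sqrt (1 / (3 * κ)))^2 := by
      rw [hc2, hx13]; norm_num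
    rw [hder, hgv, heqc]
    set A := Real.sqrt (1 - κ * (Real.sqrt (1 / (3 * κ)))^2) with hA_def
    have hsq : A * A = 1 - κ * (Real.sqrt (1 / (3 * κ)))^2 := Real.mul_self_sqrt hs.le
    have hA0 : 0 < A := Real.sqrt_pos.2 hs
    have hr : Real.sqrt (1 / (3 * κ)) * (-(κ * Real.sqrt (1 / (3 * κ))) / A) / A
        = -(κ * (Real.sqrt (1 / (3 * κ)))^2) / (A * A) := by
      field_simp
      try tauto
    rw [hr, hsq, hc2, hx13]
    norm_num
  · -- t > c : hyperbola branch
    have ht0 : 0 < t := hc.trans hgt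
    have hsκ : 0 < Real.sqrt (2*κ) := Real.sqrt_pos.2 (by positivity)
    have hev : gfun κ =ᶠ[𝓝 t]
        (fun x => 1 / (3 * Real.sqrt (2*κ) * x) + Real.sqrt (1/6)) := by
      filter_upwards [Ioi_mem_nhds hgt] with x hx
      have hx0 : 0 < x := hc.trans hx
      have hnot : ¬ |x| < Real.sqrt (1 / (3 * κ)) :=
        not_lt.2 (by rw [abs_of_pos hx0]; exact le_of_lt hx)
      simp only [gfun]
      rw [if_neg hnot, abs_of_pos hx0]
    have hder : deriv (gfun κ) t = -(1 / (3 * Real.sqrt (2*κ))) / t^2 :=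
      ((deriv_branch2 hκ ht0.ne').congr_of_eventuallyEq hev).deriv
    have hgv : gfun κ t = 1 / (3 * Real.sqrt (2*κ) * t) + Real.sqrt (1/6) := by
      have hnot : ¬ |t| < Real.sqrt (1 / (3 * κ)) :=
        not_lt.2 (by rw [abs_of_pos ht0]; exact le_of_lt hgt)
      simp only [gfun]
      rw [if_neg hnot, abs_of_pos ht0]
    rw [hder, hgv]
    set a := 1 / (3 * Real.sqrt (2*κ) * t) with ha_def
    have ha0 : 0 < a := by positivity
    have hnum : t * (-(1 / (3 * Real.sqrt (2*κ))) / t^2) = -a := by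
      rw [ha_def]; field_simp
    have haq : a ≤ Real.sqrt (1/6) := by
      rw [ha_def, ← div_div, b_eq hκ, div_le_iff₀ ht0]
      exact mul_le_mul_of_nonneg_left (le_of_lt hgt) hq0.le
    rw [hnum]
    have hden : 0 < a + Real.sqrt (1/6) := by positivity
    constructor
    · rw [neg_div, neg_le_neg_iff, div_le_iff₀ hden]
      linarith
    · apply div_nonpos_of_nonpos_of_nonneg <;> linarith
end
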